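/- Fix p_I > 0, T > 0, and n ∈ {1,…,5}, and set k = 6 − n. Define N(λ) := p_I·( 2T − (T + n/(2λ))·Δg(k;λT) − g(k;λT)/(2λ) ) for λ > 0, where Δg(k;μ) = g(k;μ) − g(k−1;μ). Then λ ↦ N(λ) is differentiable on (0,∞) and its derivative at each λ > 0 equals p_I·( (n·Δg(k;λT) + g(k;λT))/(2λ²) − T·(T + n/(2λ))·exp(−λT)·(λT)^{k−1}/(k−1)! − (T/(2λ))·∑_{m=0}^{k−1} exp(−λT)·(λT)^m/m! ). -/

import Mathlib

open Real

/-- Truncated Poisson mean: `g(k;μ) = ∑_{m=0}^∞ min(m,k) · e^{−μ} μ^m / m!`. -/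
noncomputable def truncMean (k : ℕ) (μ : ℝ) : ℝ :=
  ∑' m : ℕ, (min m k : ℝ) * (Real.exp (-μ) * μ ^ m / (m.factorial : ℝ))

noncomputable def pois (m : ℕ) (μ : ℝ) : ℝ :=
  Real.exp (-μ) * μ ^ m / (m.factorial : ℝ)

noncomputable def Sfun (k : ℕ) (μ : ℝ) : ℝ := ∑ m ∈ Finset.range k, pois m μ

lemma summable_pois (μ : ℝ) : Summable (fun m : ℕ => pois m μ) := by
  simpa [pois, mul_div_assoc] using
    (Real.summable_pow_div_factorial μ).mul_left (Real.exp (-μ))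

lemma tsum_pois (μ : ℝ) : ∑' m : ℕ, pois m μ = 1 := by
  have h : ∑' m : ℕ, (μ ^ m / (m.factorial : ℝ)) = Real.exp μ := by
    rw [Real.exp_eq_exp_ℝ, NormedSpace.exp_eq_tsum_div]
  calc ∑' m : ℕ, pois m μ = Real.exp (-μ) * ∑' m : ℕ, (μ ^ m / (m.factorial : ℝ)) := by
        rw [← tsum_mul_left]; simp [pois, mul_div_assoc]
    _ = 1 := by rw [h, ← Real.exp_add]; simp

lemma truncMean_eq_finsum (k : ℕ) (μ : ℝ) :
    truncMean k μ = (k : ℝ) - ∑ m ∈ Finset.range k, ((k : ℝ) - m) * pois m μ := by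
  have hps := summable_pois μ
  have hfin : Summable (fun m : ℕ => ((k : ℝ) - (min m k : ℕ)) * pois m μ) := by
    apply summable_of_ne_finset_zero (s := Finset.range k)
    intro m hm
    have : min m k = k := min_eq_right (by simpa using Finset.mem_range.not.mp hm |> Nat.le_of_not_lt)
    simp [this]
  have hmain : (fun m : ℕ => ((min m k : ℕ) : ℝ) * pois m μ)
      = fun m => (k : ℝ) * pois m μ - ((k : ℝ) - (min m k : ℕ)) * pois m μ := by
    funext m; ring
  have : truncMean k μ = ∑' m : ℕ, (((min m k : ℕ) : ℝ) * pois m μ) := by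
    simp [truncMean, pois]
  rw [this, hmain, Summable.tsum_sub (hps.mul_left _) hfin, tsum_mul_left, tsum_pois]
  congr 1
  · ring
  · rw [tsum_eq_sum (s := Finset.range k)]
    · apply Finset.sum_congr rfl
      intro m hm
      have : min m k = m := min_eq_left (Nat.le_of_lt (Finset.mem_range.mp hm))
      simp [this]
    · intro m hm
      have : min m k = k := min_eq_right (Nat.le_of_not_lt (by simpa using hm))
      simp [this]

lemma sum_Sfun_eq (k : ℕ) (μ : ℝ) :
    ∑ j ∈ Finset.range k, Sfun (j + 1) μ
      = ∑ m ∈ Finset.range k, ((k : ℝ) - m) * pois m μ := by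
  induction k with
  | zero => simp
  | succ k ih =>
      rw [Finset.sum_range_succ, ih]
      have h1 : ∑ m ∈ Finset.range (k + 1), (((k : ℝ) + 1) - m) * pois m μ
          = (∑ m ∈ Finset.range (k + 1), ((k : ℝ) - m) * pois m μ)
            + ∑ m ∈ Finset.range (k + 1), pois m μ := by
        rw [← Finset.sum_add_distrib]; apply Finset.sum_congr rfl; intro m _; ring
      push_cast
      rw [h1, Finset.sum_range_succ (f := fun m => ((k : ℝ) - m) * pois m μ)]
      simp [Sfun]

lemma truncMean_closed (k : ℕ) (μ : ℝ) :
    truncMean k μ = (k : ℝ) - ∑ j ∈ Finset.range k, Sfun (j + 1) μ := by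
  rw [truncMean_eq_finsum, sum_Sfun_eq]

lemma hasDerivAt_pois_zero (μ : ℝ) : HasDerivAt (pois 0) (-pois 0 μ) μ := by
  have h : HasDerivAt (fun x : ℝ => Real.exp (-x)) (Real.exp (-μ) * -1) μ :=
    (Real.hasDerivAt_exp (-μ)).comp μ (hasDerivAt_neg μ)
  have he : (pois 0) = fun x : ℝ => Real.exp (-x) := by
    funext x; simp [pois]
  rw [he]
  simpa [pois] using h

lemma hasDerivAt_pois_succ (m : ℕ) (μ : ℝ) :
    HasDerivAt (pois (m + 1)) (pois m μ - pois (m + 1) μ) μ := by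
  have hexp : HasDerivAt (fun x : ℝ => Real.exp (-x)) (Real.exp (-μ) * -1) μ :=
    (Real.hasDerivAt_exp (-μ)).comp μ (hasDerivAt_neg μ)
  have hpow : HasDerivAt (fun x : ℝ => x ^ (m + 1)) ((m + 1 : ℕ) * μ ^ m) μ := by
    simpa using hasDerivAt_pow (m + 1) μ
  have h := (hexp.mul hpow).div_const ((m + 1).factorial : ℝ)
  have he : (pois (m + 1)) = fun x : ℝ => Real.exp (-x) * x ^ (m + 1) / ((m + 1).factorial : ℝ) := by
    funext x; simp [pois]
  rw [he]
  convert h using 1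
  · rfl
  · rfl
  · rfl
  have hf : ((m + 1).factorial : ℝ) = (m + 1 : ℝ) * (m.factorial : ℝ) := by
    rw [Nat.factorial_succ]; push_cast; ring
  have hm0 : (m.factorial : ℝ) ≠ 0 := Nat.cast_ne_zero.mpr m.factorial_ne_zero
  have hm1 : ((m + 1 : ℝ)) ≠ 0 := by positivity
  simp only [pois, hf]
  field_simp
  push_cast
  ring

lemma hasDerivAt_Sfun (k : ℕ) (μ : ℝ) :
    HasDerivAt (Sfun (k + 1)) (-(pois k μ)) μ := by
  induction k with
  | zero =>
      have he : Sfun 1 = pois 0 := by funext x; simp [Sfun]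
      rw [he]; exact hasDerivAt_pois_zero μ
  | succ k ih =>
      have he : Sfun (k + 2) = fun x => Sfun (k + 1) x + pois (k + 1) x := by
        funext x; simp [Sfun, Finset.sum_range_succ]
      rw [he]
      have := ih.add (hasDerivAt_pois_succ k μ)
      convert this using 1
      · rfl
      · rfl
      · rfl
      ring

/-- **Derivative formula (A.2) / Equation (8).** With `k = 6 − n` and
`N(λ) = p_I (2T − (T + n/(2λ)) Δg(k;λT) − g(k;λT)/(2λ))`, the map `λ ↦ N(λ)` is
differentiable on `(0,∞)` with derivative
`p_I ( (n Δg + g)/(2λ²) − T (T + n/(2λ)) e^{−λT}(λT)^{k−1}/(k−1)! − (T/(2λ)) P(M < k) )`. -/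
theorem increment_numerator_hasDerivAt_lambda
    (p_I T : ℝ) (hp : 0 < p_I) (hT : 0 < T)
    (n : ℕ) (hn1 : 1 ≤ n) (hn5 : n ≤ 5) (k : ℕ) (hk : k = 6 - n) :
    ∀ lam : ℝ, 0 < lam →
      HasDerivAt
        (fun l : ℝ => p_I * (2 * T
          - (T + (n : ℝ) / (2 * l)) * (truncMean k (l * T) - truncMean (k - 1) (l * T))
          - truncMean k (l * T) / (2 * l)))
        (p_I * (((n : ℝ) * (truncMean k (lam * T) - truncMean (k - 1) (lam * T))
              + truncMean k (lam * T)) / (2 * lam ^ 2)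
          - T * (T + (n : ℝ) / (2 * lam))
              * (Real.exp (-(lam * T)) * (lam * T) ^ (k - 1) / ((k - 1).factorial : ℝ))
          - (T / (2 * lam))
              * ∑ m ∈ Finset.range k, Real.exp (-(lam * T)) * (lam * T) ^ m / (m.factorial : ℝ)))
        lam := by
  intro lam hlam
  have hk1 : 1 ≤ k := by omega
  have hkk : k - 1 + 1 = k := by omega
  have hE : ∀ μ : ℝ, truncMean k μ - truncMean (k - 1) μ = 1 - Sfun k μ := by
    intro μ
    rw [truncMean_closed, truncMean_closed]
    have h1 : ∑ j ∈ Finset.range k, Sfun (j + 1) μ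
        = (∑ j ∈ Finset.range (k - 1), Sfun (j + 1) μ) + Sfun k μ := by
      conv_lhs => rw [← hkk]
      rw [Finset.sum_range_succ, hkk]
    have h2 : ((k - 1 : ℕ) : ℝ) = (k : ℝ) - 1 := by
      rw [Nat.cast_sub hk1, Nat.cast_one]
    rw [h1, h2]; ring
  simp only [hE]
  simp only [truncMean_closed]
  -- build the derivative
  have hne : (2 * lam) ≠ 0 := by positivity
  have hlin : HasDerivAt (fun l : ℝ => l * T) T lam := hasDerivAt_mul_const T
  have h2l : HasDerivAt (fun l : ℝ => 2 * l) 2 lam := by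
    simpa using (hasDerivAt_id lam).const_mul (2 : ℝ)
  have hSk : HasDerivAt (Sfun k) (-(pois (k - 1) (lam * T))) (lam * T) := by
    rw [← hkk]; exact hasDerivAt_Sfun (k - 1) (lam * T)
  have hS : HasDerivAt (fun l : ℝ => Sfun k (l * T))
      (-(pois (k - 1) (lam * T)) * T) lam := by
    have := hSk.comp lam hlin; exact this
  have c1 : HasDerivAt (fun l : ℝ => T + (n : ℝ) / (2 * l))
      ((0 * (2 * lam) - (n : ℝ) * 2) / (2 * lam) ^ 2) lam :=
    ((hasDerivAt_const lam (n : ℝ)).div h2l hne).const_add T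
  have c2 : HasDerivAt (fun l : ℝ => 1 - Sfun k (l * T))
      (-(-(pois (k - 1) (lam * T)) * T)) lam := hS.const_sub 1
  have c3 := c1.mul c2
  have c4 : HasDerivAt (fun l : ℝ => ∑ j ∈ Finset.range k, Sfun (j + 1) (l * T))
      (∑ j ∈ Finset.range k, -(pois j (lam * T)) * T) lam :=
    HasDerivAt.fun_sum (A := fun j l => Sfun (j + 1) (l * T))
      (fun j _ => by have := (hasDerivAt_Sfun j (lam * T)).comp lam hlin; exact this)
  have c5 := c4.const_sub (k : ℝ)
  have c6 := c5.div h2l hne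
  have c7 := (c3.const_sub (2 * T)).sub c6
  have c8 := c7.const_mul p_I
  convert c8 using 1
  · rfl
  · rfl
  · rfl
  have hsum : (∑ j ∈ Finset.range k, -pois j (lam * T) * T)
      = -T * Sfun k (lam * T) := by
    rw [Sfun, Finset.mul_sum]
    apply Finset.sum_congr rfl; intro j _; ring
  have h1' : (∑ j ∈ Finset.range k, Sfun (j + 1) (lam * T))
      = (∑ j ∈ Finset.range (k - 1), Sfun (j + 1) (lam * T)) + Sfun k (lam * T) := by
    conv_lhs => rw [← hkk]
    rw [Finset.sum_range_succ, hkk]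
  have h2 : ((k - 1 : ℕ) : ℝ) = (k : ℝ) - 1 := by
    rw [Nat.cast_sub hk1, Nat.cast_one]
  have hSfun : (∑ m ∈ Finset.range k,
      Real.exp (-(lam * T)) * (lam * T) ^ m / (m.factorial : ℝ)) = Sfun k (lam * T) := by
    simp [Sfun, pois]
  have hpois : Real.exp (-(lam * T)) * (lam * T) ^ (k - 1) / ((k - 1).factorial : ℝ)
      = pois (k - 1) (lam * T) := rfl
  have hsum : (∑ j ∈ Finset.range k, -pois j (lam * T) * T)
      = -T * Sfun k (lam * T) := by
    rw [Sfun, Finset.mul_sum]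
    apply Finset.sum_congr rfl; intro j _; ring
  have h1' : (∑ j ∈ Finset.range k, Sfun (j + 1) (lam * T))
      = (∑ j ∈ Finset.range (k - 1), Sfun (j + 1) (lam * T)) + Sfun k (lam * T) := by
    conv_lhs => rw [← hkk]
    rw [Finset.sum_range_succ, hkk]
  have h2 : ((k - 1 : ℕ) : ℝ) = (k : ℝ) - 1 := by
    rw [Nat.cast_sub hk1, Nat.cast_one]
  have hSfun : (∑ m ∈ Finset.range k,
      Real.exp (-(lam * T)) * (lam * T) ^ m / (m.factorial : ℝ)) = Sfun k (lam * T) := by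
    simp [Sfun, pois]
  have hpois : Real.exp (-(lam * T)) * (lam * T) ^ (k - 1) / ((k - 1).factorial : ℝ)
      = pois (k - 1) (lam * T) := rfl
  simp only [hsum, hSfun, hpois, h1', h2]
  have hl : lam ≠ 0 := ne_of_gt hlam
  field_simp
  ring
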